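/- For every ε > 0 and every p > 0, one has M^p · P[ max_{1 ≤ k ≤ M} | k − (1/3)·𝔩_{N_k^W} | > M^{1/2+ε} ] → 0 as M → ∞, where M ranges over the positive integers. -/

import Mathlib

open MeasureTheory ProbabilityTheory Filter Topology
open scoped ENNReal NNReal

namespace Stmt3Aux

/-- zero-visit times of a path -/
noncomputable def zv (x : ℕ → ℤ) : ℕ → ℕ
  | 0 => 0
  | m + 1 => sInf {n | zv x m < n ∧ x n = 0}

/-- success indicator: the walk steps to 1 right after the i-th zero-visit -/
noncomputable def gs (x : ℕ → ℤ) (i : ℕ) : Bool := decide (x (zv x i + 1) = 1)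

/-- number of successes among the first n zero-visits -/
noncomputable def cnt (x : ℕ → ℤ) (n : ℕ) : ℕ :=
  ((Finset.range n).filter (fun i => gs x i = true)).card

/-- the path visits 0 infinitely often -/
def GoodP (x : ℕ → ℤ) : Prop := ∀ m : ℕ, ∃ n, m < n ∧ x n = 0

/-- the path has steps of size at most 1 -/
def StepsP (x : ℕ → ℤ) : Prop := ∀ n, |x (n + 1) - x n| ≤ 1

lemma zv_zero (x : ℕ → ℤ) : zv x 0 = 0 := rfl

lemma zv_succ (x : ℕ → ℤ) (m : ℕ) : zv x (m+1) = sInf {n | zv x m < n ∧ x n = 0} := rfl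

lemma zv_lt_succ {x : ℕ → ℤ} (hx : GoodP x) (m : ℕ) :
    zv x m < zv x (m+1) ∧ x (zv x (m+1)) = 0 := by
  have hne : {n | zv x m < n ∧ x n = 0}.Nonempty := by
    obtain ⟨n, hn, hn0⟩ := hx (zv x m); exact ⟨n, hn, hn0⟩
  have := Nat.sInf_mem hne
  rw [zv_succ]; exact ⟨this.1, this.2⟩

lemma zv_strictMono {x : ℕ → ℤ} (hx : GoodP x) : StrictMono (zv x) :=
  strictMono_nat_of_lt_succ (fun m => (zv_lt_succ hx m).1)

lemma zv_zero_val {x : ℕ → ℤ} (h0 : x 0 = 0) (hx : GoodP x) (m : ℕ) : x (zv x m) = 0 := by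
  cases m with
  | zero => rw [zv_zero]; exact h0
  | succ m => exact (zv_lt_succ hx m).2

lemma zv_gap {x : ℕ → ℤ} (m j : ℕ) (h1 : zv x m < j) (h2 : j < zv x (m+1)) : x j ≠ 0 := by
  intro hj
  have : j ∈ {n | zv x m < n ∧ x n = 0} := ⟨h1, hj⟩
  exact absurd (Nat.sInf_le this) (by rw [zv_succ] at h2; omega)

lemma exists_zv {x : ℕ → ℤ} (h0 : x 0 = 0) (hx : GoodP x) {j : ℕ} (hj : x j = 0) :
    ∃ i, zv x i = j := by
  have hmono := zv_strictMono hx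
  have hub : ∀ i, i ≤ zv x i := fun i => hmono.le_apply
  have hex : ∃ i, j ≤ zv x i := ⟨j, hub j⟩
  classical
  set i := Nat.find hex with hi
  have hile : j ≤ zv x i := Nat.find_spec hex
  rcases eq_or_lt_of_le hile with h | h
  · exact ⟨i, h.symm⟩
  · exfalso
    have hi0 : i ≠ 0 := by
      intro h0'
      have hz : zv x i = 0 := by rw [h0', zv_zero]
      omega
    obtain ⟨i', hii'⟩ := Nat.exists_eq_succ_of_ne_zero hi0
    have hlt : zv x i' < j := by
      have hnot : ¬ j ≤ zv x i' := Nat.find_min hex (by omega)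
      omega
    exact zv_gap i' j hlt (by rw [show i' + 1 = i from hii'.symm]; exact h) hj

lemma count_zeros {x : ℕ → ℤ} (h0 : x 0 = 0) (hx : GoodP x) (i : ℕ) :
    ((Finset.range (zv x i + 1)).filter (fun j => x j = 0)).card = i + 1 := by
  induction i with
  | zero =>
      rw [zv_zero]
      norm_num [Finset.filter_singleton, Finset.range_one, h0]
  | succ i ih =>
      have hlt := (zv_lt_succ hx i).1
      have hsplit : Finset.range (zv x (i+1) + 1)
          = Finset.range (zv x i + 1) ∪ Finset.Ico (zv x i + 1) (zv x (i+1) + 1) := by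
        rw [Finset.range_eq_Ico, Finset.range_eq_Ico]
        exact (Finset.Ico_union_Ico_eq_Ico (by omega) (by omega)).symm
      rw [hsplit, Finset.filter_union, Finset.card_union_of_disjoint]
      · rw [ih]
        have : (Finset.Ico (zv x i + 1) (zv x (i+1) + 1)).filter (fun j => x j = 0)
            = {zv x (i+1)} := by
          ext j
          simp only [Finset.mem_filter, Finset.mem_Ico, Finset.mem_singleton]
          constructor
          · rintro ⟨⟨h1, h2⟩, h3⟩
            by_contra hne
            exact zv_gap i j (by omega) (by omega) h3
          · rintro rfl
            exact ⟨⟨by omega, by omega⟩, (zv_lt_succ hx i).2⟩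
        rw [this]; simp
      · exact Finset.disjoint_filter_filter (by
          rw [Finset.range_eq_Ico]
          exact Finset.Ico_disjoint_Ico_consecutive 0 (zv x i + 1) (zv x (i+1) + 1))

lemma ivt {x : ℕ → ℤ} (hs : StepsP x) {a b : ℕ} (hab : a ≤ b) (ha : x a ≤ 1) (hb : 2 ≤ x b) :
    ∃ c, a ≤ c ∧ c < b ∧ x c = 1 := by
  induction b with
  | zero =>
      exfalso
      have : a = 0 := by omega
      subst this; omega
  | succ b ih =>
      have hstep := hs b
      have habs : x b - 1 ≤ x (b+1) ∧ x (b+1) ≤ x b + 1 := by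
        constructor <;> [skip; skip] <;> · rw [abs_le] at hstep; omega
      rcases le_or_gt (x b) 1 with h | h
      · have hab' : a ≤ b := by
          by_contra h'
          have : a = b + 1 := by omega
          subst this; omega
        have hxb : x b = 1 := by omega
        exact ⟨b, hab', by omega, hxb⟩
      · have hab' : a ≤ b := by
          by_contra h'
          have : a = b + 1 := by omega
          subst this; omega
        obtain ⟨c, hc1, hc2, hc3⟩ := ih hab' (by omega)
        exact ⟨c, hc1, by omega, hc3⟩


/-- key structural lemma: if `w` is the least time `≥ m0` where the path is `1`,
and `x m0 = 0`, then `w - 1` is a zero-visit time whose success indicator is `true`,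
and all earlier zero-visits located in `[m0, w-1)` are failures. -/
lemma waux {x : ℕ → ℤ} (h0 : x 0 = 0) (hx : GoodP x) (hs : StepsP x)
    {m0 w : ℕ} (hm0 : x m0 = 0) (hw : IsLeast {n | m0 ≤ n ∧ x n = 1} w) :
    ∃ i, w = zv x i + 1 ∧ gs x i = true ∧
      ∀ i', i' < i → m0 ≤ zv x i' → gs x i' = false := by
  obtain ⟨⟨hwm0, hw1⟩, hwlb⟩ := hw
  have hwgt : m0 < w := by
    rcases eq_or_lt_of_le hwm0 with h | h
    · exfalso; rw [← h] at hw1; rw [hm0] at hw1; exact one_ne_zero hw1.symm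
    · exact h
  set j := w - 1 with hj
  have hjw : j + 1 = w := by omega
  have hjm0 : m0 ≤ j := by omega
  have hxj1 : x j ≠ 1 := by
    intro hh
    have := hwlb ⟨hjm0, hh⟩
    omega
  have hxjrange : x j = 0 ∨ x j = 2 := by
    have hstep := hs j
    rw [abs_le] at hstep
    rw [hjw] at hstep
    rw [hw1] at hstep
    omega
  have hxj0 : x j = 0 := by
    rcases hxjrange with h | h
    · exact h
    · exfalso
      obtain ⟨c, hc1, hc2, hc3⟩ := ivt hs hjm0 (by rw [hm0]; norm_num) (by rw [h])
      have := hwlb ⟨hc1, hc3⟩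
      omega
  obtain ⟨i, hi⟩ := exists_zv h0 hx hxj0
  refine ⟨i, by omega, ?_, ?_⟩
  · have : x (zv x i + 1) = 1 := by rw [hi, hjw, hw1]
    simp [gs, this]
  · intro i' hii' hm0i'
    by_contra hgs
    have hgs' : x (zv x i' + 1) = 1 := by
      rcases Bool.eq_false_or_eq_true (gs x i') with h | h
      · simpa [gs] using h
      · exact absurd h hgs
    have hzvlt : zv x i' < zv x i := (zv_strictMono hx) hii'
    have := hwlb ⟨by omega, hgs'⟩
    omega

/-- The iterated excursion times match successive successes. -/
lemma main_path {x : ℕ → ℤ} {nE nW : ℕ → ℕ}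
    (h0 : x 0 = 0) (hx : GoodP x) (hs : StepsP x)
    (hE1 : nE 1 = 0)
    (hW : ∀ k, 1 ≤ k → IsLeast {n | nE k ≤ n ∧ x n = 1} (nW k))
    (hE : ∀ k, 1 ≤ k → IsLeast {n | nW k ≤ n ∧ x n = 0} (nE (k+1))) :
    ∀ k, 1 ≤ k → ∃ i, nW k = zv x i + 1 ∧ cnt x (i + 1) = k := by
  intro k hk
  induction k with
  | zero => omega
  | succ k ih =>
      rcases Nat.eq_or_lt_of_le hk with h1 | h2
      · -- base case k+1 = 1, i.e. k = 0
        have hk0 : k = 0 := by omega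
        subst hk0
        obtain ⟨i, hwi, hgs, hfail⟩ := waux h0 hx hs (m0 := 0) h0 (by rw [← hE1] at *; exact hW 1 le_rfl)
        refine ⟨i, hwi, ?_⟩
        have : (Finset.range (i+1)).filter (fun i' => gs x i' = true) = {i} := by
          ext i'
          simp only [Finset.mem_filter, Finset.mem_range, Finset.mem_singleton]
          constructor
          · rintro ⟨hr, hg⟩
            by_contra hne
            have := hfail i' (by omega) (Nat.zero_le _)
            rw [this] at hg; exact Bool.false_ne_true hg
          · rintro rfl; exact ⟨by omega, hgs⟩
        rw [cnt, this]; simp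
      · -- inductive step: k ≥ 1
        have hk1 : 1 ≤ k := by omega
        obtain ⟨i0, hwi0, hcnt0⟩ := ih hk1
        have hEk := hE k hk1
        obtain ⟨⟨hEge, hE0⟩, hElb⟩ := hEk
        obtain ⟨i, hwi, hgs, hfail⟩ := waux h0 hx hs hE0 (hW (k+1) (by omega))
        refine ⟨i, hwi, ?_⟩
        -- i0 < i
        have hmono := zv_strictMono hx
        have hzv0 : zv x i0 = nW k - 1 := by omega
        have hzvi : zv x i = nW (k+1) - 1 := by omega
        have hWk1 : nW k ≤ nE (k+1) := hEge
        obtain hWk1' := hW (k+1) (by omega)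
        have hWge : nE (k+1) ≤ nW (k+1) := hWk1'.1.1
        have hWne : nW (k+1) ≠ nE (k+1) := by
          intro hh
          have h1' := hWk1'.1.2
          rw [hh, hE0] at h1'
          exact one_ne_zero h1'.symm
        have hlt : zv x i0 < zv x i := by omega
        have hi0i : i0 < i := hmono.lt_iff_lt.mp hlt
        -- failures strictly between i0 and i
        have hfail2 : ∀ i', i0 < i' → i' < i → gs x i' = false := by
          intro i' h1 h2
          have hz1 : zv x i0 < zv x i' := hmono.lt_iff_lt.mpr h1
          have hz2 : zv x i' < zv x i := hmono.lt_iff_lt.mpr h2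
          have hzero : x (zv x i') = 0 := zv_zero_val h0 hx i'
          have hge : nW k ≤ zv x i' := by omega
          have : nE (k+1) ≤ zv x i' := hElb ⟨hge, hzero⟩
          exact hfail i' h2 this
        -- count
        have hsplit : Finset.range (i+1)
            = Finset.range (i0+1) ∪ Finset.Ico (i0+1) (i+1) := by
          rw [Finset.range_eq_Ico, Finset.range_eq_Ico]
          exact (Finset.Ico_union_Ico_eq_Ico (by omega) (by omega)).symm
        have hIco : (Finset.Ico (i0+1) (i+1)).filter (fun i' => gs x i' = true) = {i} := by
          ext i'
          simp only [Finset.mem_filter, Finset.mem_Ico, Finset.mem_singleton]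
          constructor
          · rintro ⟨⟨ha, hb⟩, hg⟩
            by_contra hne
            rw [hfail2 i' (by omega) (by omega)] at hg
            exact Bool.false_ne_true hg
          · rintro rfl; exact ⟨⟨by omega, by omega⟩, hgs⟩
        rw [cnt, hsplit, Finset.filter_union, Finset.card_union_of_disjoint, hIco]
        · rw [show ((Finset.range (i0+1)).filter (fun i' => gs x i' = true)).card = k from hcnt0]
          simp
        · rw [hIco]
          simp only [Finset.disjoint_singleton_right, Finset.mem_filter, Finset.mem_range]
          rintro ⟨hr, -⟩
          omega


section Measure

variable {Ω : Type*} [MeasurableSpace Ω]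

lemma measurableSet_of_int (s : Set ℤ) : MeasurableSet s := (Set.to_countable s).measurableSet

lemma measurable_sInf {S : Ω → Set ℕ} (hS : ∀ n : ℕ, MeasurableSet {ω | n ∈ S ω}) :
    Measurable (fun ω => sInf (S ω)) := by
  apply measurable_to_countable'
  intro v
  rcases Nat.eq_zero_or_pos v with hv | hv
  · subst hv
    have : (fun ω => sInf (S ω)) ⁻¹' {0}
        = {ω | 0 ∈ S ω} ∪ ⋂ n : ℕ, {ω | n ∈ S ω}ᶜ := by
      ext ω
      simp only [Set.mem_preimage, Set.mem_singleton_iff, Set.mem_union, Set.mem_iInter,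
        Set.mem_compl_iff, Set.mem_setOf_eq]
      rw [Nat.sInf_eq_zero]
      constructor
      · rintro (h | h)
        · exact Or.inl h
        · exact Or.inr (fun n hn => by rw [h] at hn; exact hn)
      · rintro (h | h)
        · exact Or.inl h
        · exact Or.inr (Set.eq_empty_iff_forall_notMem.mpr h)
    rw [this]
    exact ((hS 0).union (MeasurableSet.iInter (fun n => (hS n).compl)))
  · have : (fun ω => sInf (S ω)) ⁻¹' {v}
        = {ω | v ∈ S ω} ∩ ⋂ u : ℕ, ⋂ _ : u < v, {ω | u ∈ S ω}ᶜ := by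
      ext ω
      simp only [Set.mem_preimage, Set.mem_singleton_iff, Set.mem_inter_iff, Set.mem_iInter,
        Set.mem_compl_iff, Set.mem_setOf_eq]
      constructor
      · intro h
        have hne : (S ω).Nonempty := by
          by_contra hemp
          rw [Set.not_nonempty_iff_eq_empty] at hemp
          rw [hemp, Nat.sInf_empty] at h
          omega
        constructor
        · rw [← h]; exact Nat.sInf_mem hne
        · intro u hu hmem
          have := Nat.sInf_le hmem
          omega
      · rintro ⟨hmem, hbelow⟩
        have h1 := Nat.sInf_le hmem
        rcases eq_or_lt_of_le h1 with h | h
        · exact h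
        · exfalso
          have hne : (S ω).Nonempty := ⟨v, hmem⟩
          exact hbelow _ h (Nat.sInf_mem hne)
    rw [this]
    exact (hS v).inter (MeasurableSet.iInter (fun u => MeasurableSet.iInter
      (fun _ => (hS u).compl)))

variable {X : Ω → ℕ → ℤ}

lemma measurable_zvX (hXmeas : ∀ n, Measurable (fun ω => X ω n)) (m : ℕ) :
    Measurable (fun ω => zv (X ω) m) := by
  induction m with
  | zero =>
      have : (fun ω => zv (X ω) 0) = fun _ => 0 := by
        funext ω; exact zv_zero (X ω)
      rw [this]; exact measurable_const
  | succ m ih =>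
      have : (fun ω => zv (X ω) (m+1))
          = fun ω => sInf {n | zv (X ω) m < n ∧ X ω n = 0} := by
        funext ω; exact zv_succ (X ω) m
      rw [this]
      apply measurable_sInf
      intro n
      have : {ω | n ∈ {n' | zv (X ω) m < n' ∧ X ω n' = 0}}
          = ((fun ω => zv (X ω) m) ⁻¹' {u | u < n}) ∩ ((fun ω => X ω n) ⁻¹' {0}) := by
        ext ω
        simp only [Set.mem_setOf_eq, Set.mem_inter_iff, Set.mem_preimage,
          Set.mem_singleton_iff]
      rw [this]
      exact (ih ((Set.to_countable _).measurableSet)).inter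
        ((hXmeas n) (measurableSet_of_int _))

lemma measurable_gsX (hXmeas : ∀ n, Measurable (fun ω => X ω n)) (i : ℕ) :
    Measurable (fun ω => gs (X ω) i) := by
  apply measurable_to_countable'
  intro b
  have : (fun ω => gs (X ω) i) ⁻¹' {b}
      = ⋃ v : ℕ, ((fun ω => zv (X ω) i) ⁻¹' {v}) ∩ {ω | decide (X ω (v+1) = 1) = b} := by
    ext ω
    simp only [Set.mem_preimage, Set.mem_singleton_iff, Set.mem_iUnion, Set.mem_inter_iff,
      Set.mem_setOf_eq]
    constructor
    · intro h
      exact ⟨zv (X ω) i, rfl, by rw [← h]; rfl⟩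
    · rintro ⟨v, hv, hd⟩
      rw [← hd]
      simp only [gs, hv]
  rw [this]
  apply MeasurableSet.iUnion
  intro v
  refine (measurable_zvX hXmeas i ((Set.to_countable _).measurableSet)).inter ?_
  have : {ω | decide (X ω (v+1) = 1) = b} = (fun ω => X ω (v+1)) ⁻¹' {z | decide (z = 1) = b} := rfl
  rw [this]
  exact (hXmeas (v+1)) (measurableSet_of_int _)

lemma measurable_cntX (hXmeas : ∀ n, Measurable (fun ω => X ω n)) (n : ℕ) :
    Measurable (fun ω => cnt (X ω) n) := by
  have : (fun ω => cnt (X ω) n)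
      = fun ω => ∑ i ∈ Finset.range n, (if gs (X ω) i = true then 1 else 0) := by
    funext ω
    rw [cnt, Finset.card_filter]
  rw [this]
  apply Finset.measurable_sum
  intro i _
  have : (fun ω => if gs (X ω) i = true then (1:ℕ) else 0)
      = (fun b : Bool => if b = true then (1:ℕ) else 0) ∘ (fun ω => gs (X ω) i) := rfl
  rw [this]
  exact Measurable.comp (measurable_from_top) (measurable_gsX hXmeas i)

end Measure

/-- the conditions defining a block: the first `n+1` zero-visit times are meaningful,
the `n`-th one equals `s`, and the first `n` success indicators are prescribed. -/
def BlkP (x : ℕ → ℤ) (n : ℕ) (a : ℕ → Bool) (s : ℕ) : Prop :=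
  (∀ i, i < n → zv x i < zv x (i+1)) ∧ zv x n = s ∧ ∀ i, i < n → gs x i = a i

lemma chain_le {x : ℕ → ℤ} {n : ℕ} (hchain : ∀ i, i < n → zv x i < zv x (i+1)) :
    ∀ i, i ≤ n → zv x i ≤ zv x n := by
  have aux : ∀ j, j ≤ n → ∀ i, i ≤ j → zv x i ≤ zv x j := by
    intro j
    induction j with
    | zero =>
        intro _ i hi
        rw [Nat.le_zero.mp hi]
    | succ j ih =>
        intro hj i hi
        rcases Nat.eq_or_lt_of_le hi with h | h
        · rw [h]
        · have h1 : zv x i ≤ zv x j := ih (by omega) i (by omega)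
          have h2 : zv x j < zv x (j+1) := hchain j (by omega)
          omega
  exact fun i hi => aux n le_rfl i hi

lemma BlkP.zv_le_s {x : ℕ → ℤ} {n a s} (h : BlkP x n a s) :
    ∀ i, i ≤ n → zv x i ≤ s := by
  intro i hi
  rw [← h.2.1]
  exact chain_le h.1 i hi

lemma zv_prefix {x y : ℕ → ℤ} {n s : ℕ} (hagree : ∀ j, j ≤ s → x j = y j)
    (hchain : ∀ i, i < n → zv x i < zv x (i+1)) (hzn : zv x n = s) :
    ∀ i, i ≤ n → zv y i = zv x i := by
  have hle : ∀ i, i ≤ n → zv x i ≤ s := by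
    intro i hi; rw [← hzn]; exact chain_le hchain i hi
  intro i
  induction i with
  | zero => intro _; rw [zv_zero, zv_zero]
  | succ i ih =>
      intro hi
      have hIH := ih (by omega)
      set v := zv x (i+1) with hv
      have hchi : zv x i < v := hchain i (by omega)
      have hvs : v ≤ s := hle (i+1) hi
      have hne : {m | zv x i < m ∧ x m = 0}.Nonempty := by
        by_contra hemp
        rw [Set.not_nonempty_iff_eq_empty] at hemp
        have : v = 0 := by rw [hv, zv_succ, hemp, Nat.sInf_empty]
        omega
      have hvmem : zv x i < v ∧ x v = 0 := by
        have := Nat.sInf_mem hne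
        rw [hv, zv_succ]
        exact this
      rw [zv_succ]
      apply le_antisymm
      · apply Nat.sInf_le
        refine ⟨by rw [hIH]; exact hvmem.1, ?_⟩
        rw [← hagree v hvs]
        exact hvmem.2
      · by_contra hcon
        push_neg at hcon
        have hSyne : {m | zv y i < m ∧ y m = 0}.Nonempty :=
          ⟨v, by rw [hIH]; exact hvmem.1, by rw [← hagree v hvs]; exact hvmem.2⟩
        have hu := Nat.sInf_mem hSyne
        set u := sInf {m | zv y i < m ∧ y m = 0} with hudef
        have huv : u < v := hcon
        have hus : u ≤ s := by omega
        have humem : u ∈ {m | zv x i < m ∧ x m = 0} := by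
          refine ⟨by rw [← hIH]; exact hu.1, ?_⟩
          rw [hagree u hus]
          exact hu.2
        have := Nat.sInf_le humem
        rw [← zv_succ, ← hv] at this
        omega

lemma BlkP.congr {x y : ℕ → ℤ} {n a s} (hagree : ∀ j, j ≤ s → x j = y j)
    (h : BlkP x n a s) : BlkP y n a s := by
  obtain ⟨hchain, hzn, hgs⟩ := h
  have hzv := zv_prefix hagree hchain hzn
  have hle : ∀ i, i ≤ n → zv x i ≤ s := BlkP.zv_le_s ⟨hchain, hzn, hgs⟩
  refine ⟨?_, ?_, ?_⟩
  · intro i hi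
    rw [hzv i (by omega), hzv (i+1) (by omega)]
    exact hchain i hi
  · rw [hzv n le_rfl]; exact hzn
  · intro i hi
    rw [← hgs i hi]
    have h1 : zv x i + 1 ≤ s := by
      have := hchain i hi
      have := hle (i+1) (by omega)
      omega
    rw [gs, gs, hzv i (by omega), hagree (zv x i + 1) h1]

lemma BlkP.val_s {x : ℕ → ℤ} {n a s} (h0 : x 0 = 0) (h : BlkP x n a s) : x s = 0 := by
  obtain ⟨hchain, hzn, -⟩ := h
  cases n with
  | zero => rw [zv_zero] at hzn; rw [← hzn]; exact h0
  | succ m =>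
      have hlt : zv x m < zv x (m+1) := hchain m (by omega)
      have hne : {n' | zv x m < n' ∧ x n' = 0}.Nonempty := by
        by_contra hemp
        rw [Set.not_nonempty_iff_eq_empty] at hemp
        have : zv x (m+1) = 0 := by rw [zv_succ, hemp, Nat.sInf_empty]
        omega
      have := Nat.sInf_mem hne
      rw [← zv_succ] at this
      rw [← hzn]
      exact this.2

section MeasureTwo

variable {Ω : Type*} [MeasurableSpace Ω] {X : Ω → ℕ → ℤ}

/-- Atom event: the first `n` success indicators are prescribed by `a`. -/
def Atom (X : Ω → ℕ → ℤ) (n : ℕ) (a : ℕ → Bool) : Set Ω :=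
  {ω | ∀ i, i < n → gs (X ω) i = a i}

/-- Block event -/
def Blk (X : Ω → ℕ → ℤ) (n : ℕ) (a : ℕ → Bool) (s : ℕ) : Set Ω :=
  {ω | BlkP (X ω) n a s}

noncomputable def pB (b : Bool) : ℝ≥0∞ := if b then (3:ℝ≥0∞)⁻¹ else 2/3

lemma measurable_Blk (hXmeas : ∀ n, Measurable (fun ω => X ω n)) (n : ℕ) (a : ℕ → Bool)
    (s : ℕ) : MeasurableSet (Blk X n a s) := by
  have : Blk X n a s =
      (⋂ i : ℕ, ⋂ _ : i < n, {ω | zv (X ω) i < zv (X ω) (i+1)}) ∩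
      ((fun ω => zv (X ω) n) ⁻¹' {s}) ∩
      (⋂ i : ℕ, ⋂ _ : i < n, ((fun ω => gs (X ω) i) ⁻¹' {a i})) := by
    ext ω
    simp only [Blk, BlkP, Set.mem_setOf_eq, Set.mem_inter_iff, Set.mem_iInter,
      Set.mem_preimage, Set.mem_singleton_iff]
    tauto
  rw [this]
  refine MeasurableSet.inter (MeasurableSet.inter ?_ ?_) ?_
  · refine MeasurableSet.iInter (fun i => MeasurableSet.iInter (fun _ => ?_))
    have : {ω | zv (X ω) i < zv (X ω) (i+1)}
        = (fun ω => (zv (X ω) i, zv (X ω) (i+1))) ⁻¹' {p : ℕ × ℕ | p.1 < p.2} := rfl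
    rw [this]
    exact ((measurable_zvX hXmeas i).prodMk (measurable_zvX hXmeas (i+1)))
      ((Set.to_countable _).measurableSet)
  · exact measurable_zvX hXmeas n ((Set.to_countable _).measurableSet)
  · refine MeasurableSet.iInter (fun i => MeasurableSet.iInter (fun _ => ?_))
    exact measurable_gsX hXmeas i ((Set.to_countable _).measurableSet)

lemma X_agree_of_D_agree (hX0 : ∀ ω, X ω 0 = 0) {ω ω' : Ω} {s : ℕ}
    (h : ∀ j, j < s → X ω (j+1) - X ω j = X ω' (j+1) - X ω' j) :
    ∀ m, m ≤ s → X ω m = X ω' m := by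
  intro m
  induction m with
  | zero => intro _; rw [hX0, hX0]
  | succ m ih =>
      intro hm
      have h1 := ih (by omega)
      have h2 := h m (by omega)
      omega

end MeasureTwo

section MeasureThree

variable {Ω : Type*} [MeasurableSpace Ω] (P : Measure Ω) [IsProbabilityMeasure P]
  {X : Ω → ℕ → ℤ}

lemma law_apply (hXmeas : ∀ n, Measurable (fun ω => X ω n))
    (hXlaw : ∀ n : ℕ, Measure.map (fun ω => X ω (n + 1) - X ω n) P
      = (3 : ℝ≥0∞)⁻¹ • (Measure.dirac (-1 : ℤ) + Measure.dirac (0 : ℤ)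
          + Measure.dirac (1 : ℤ)))
    (s : ℕ) (E : Set ℤ) :
    P ((fun ω => X ω (s+1) - X ω s) ⁻¹' E)
      = 3⁻¹ * ((Measure.dirac (-1 : ℤ)) E + (Measure.dirac (0:ℤ)) E
          + (Measure.dirac (1:ℤ)) E) := by
  have hmeas : Measurable (fun ω => X ω (s+1) - X ω s) := (hXmeas (s+1)).sub (hXmeas s)
  have h := Measure.map_apply (μ := P) hmeas (measurableSet_of_int E)
  rw [← h, hXlaw s]
  simp only [Measure.smul_apply, Measure.coe_add, Pi.add_apply, smul_eq_mul,
    Measure.dirac_apply' _ (measurableSet_of_int E)]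

lemma law_decide (hXmeas : ∀ n, Measurable (fun ω => X ω n))
    (hXlaw : ∀ n : ℕ, Measure.map (fun ω => X ω (n + 1) - X ω n) P
      = (3 : ℝ≥0∞)⁻¹ • (Measure.dirac (-1 : ℤ) + Measure.dirac (0 : ℤ)
          + Measure.dirac (1 : ℤ)))
    (s : ℕ) (b : Bool) :
    P ((fun ω => X ω (s+1) - X ω s) ⁻¹' {z | decide (z = 1) = b}) = pB b := by
  rw [law_apply P hXmeas hXlaw s]
  cases b <;>
    simp [Measure.dirac_apply' _ (measurableSet_of_int _), Set.indicator_apply, pB] <;>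
    · rw [show (2:ℝ≥0∞)/3 = 2 * 3⁻¹ by rw [div_eq_mul_inv]]
      ring

lemma blk_step (hXmeas : ∀ n, Measurable (fun ω => X ω n)) (hX0 : ∀ ω, X ω 0 = 0)
    (hXindep : iIndepFun (fun n ω => X ω (n + 1) - X ω n) P)
    (hXlaw : ∀ n : ℕ, Measure.map (fun ω => X ω (n + 1) - X ω n) P
      = (3 : ℝ≥0∞)⁻¹ • (Measure.dirac (-1 : ℤ) + Measure.dirac (0 : ℤ)
          + Measure.dirac (1 : ℤ)))
    (n : ℕ) (a : ℕ → Bool) (s : ℕ) (b : Bool) :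
    P (Blk X n a s ∩ {ω | gs (X ω) n = b}) = P (Blk X n a s) * pB b := by
  classical
  have hEq : Blk X n a s ∩ {ω | gs (X ω) n = b}
      = Blk X n a s ∩ ((fun ω => X ω (s+1) - X ω s) ⁻¹' {z | decide (z = 1) = b}) := by
    ext ω
    simp only [Set.mem_inter_iff, Set.mem_setOf_eq, Set.mem_preimage, Blk]
    constructor
    · rintro ⟨hb, hgs⟩
      refine ⟨hb, ?_⟩
      have hzs : zv (X ω) n = s := hb.2.1
      have hxs : X ω s = 0 := BlkP.val_s (hX0 ω) hb
      rw [← hgs, gs, hzs, hxs, sub_zero]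
    · rintro ⟨hb, hd⟩
      refine ⟨hb, ?_⟩
      have hzs : zv (X ω) n = s := hb.2.1
      have hxs : X ω s = 0 := BlkP.val_s (hX0 ω) hb
      rw [gs, hzs, ← hd]
      congr 1
      rw [hxs, sub_zero]
  have hpre : Blk X n a s
      = (fun ω (j : ↑(Finset.range s)) => X ω ((j:ℕ)+1) - X ω (j:ℕ)) ⁻¹'
        ((fun ω (j : ↑(Finset.range s)) => X ω ((j:ℕ)+1) - X ω (j:ℕ)) '' (Blk X n a s)) := by
    apply Set.Subset.antisymm (Set.subset_preimage_image _ _)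
    rintro ω' ⟨ω, hω, heq⟩
    have hagree : ∀ j, j ≤ s → X ω j = X ω' j := by
      apply X_agree_of_D_agree hX0
      intro j hj
      exact congrFun heq (⟨j, Finset.mem_range.mpr hj⟩ : ↑(Finset.range s))
    exact BlkP.congr hagree hω
  have hind : IndepFun (fun ω (j : ↑(Finset.range s)) => X ω ((j:ℕ)+1) - X ω (j:ℕ))
      (fun ω => X ω (s+1) - X ω s) P := by
    have h1 := hXindep.indepFun_finset (Finset.range s) {s}
      (by simp) (fun i => (hXmeas _).sub (hXmeas _))
    have h2 := h1.comp measurable_id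
      (measurable_pi_apply (⟨s, Finset.mem_singleton_self s⟩ : ↑({s} : Finset ℕ)))
    exact h2
  rw [hEq]
  nth_rewrite 1 [hpre]
  nth_rewrite 2 [hpre]
  rw [hind.measure_inter_preimage_eq_mul _ _
    ((Set.to_countable _).measurableSet) (measurableSet_of_int _)]
  rw [law_decide P hXmeas hXlaw s b]

lemma measurable_Good (hXmeas : ∀ n, Measurable (fun ω => X ω n)) :
    MeasurableSet {ω | GoodP (X ω)} := by
  have : {ω | GoodP (X ω)} = ⋂ m : ℕ, ⋃ n : ℕ, ⋃ _ : m < n, ((fun ω => X ω n) ⁻¹' {0}) := by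
    ext ω
    simp only [GoodP, Set.mem_setOf_eq, Set.mem_iInter, Set.mem_iUnion, Set.mem_preimage,
      Set.mem_singleton_iff]
    constructor <;> intro h m <;> obtain ⟨n, h1, h2⟩ := h m <;> exact ⟨n, h1, h2⟩
  rw [this]
  exact MeasurableSet.iInter (fun m => MeasurableSet.iUnion (fun n =>
    MeasurableSet.iUnion (fun _ => (hXmeas n) (measurableSet_of_int _))))

lemma prob_eq_one_of_ae {Q : Ω → Prop} (h : ∀ᵐ ω ∂P, Q ω) : P {ω | Q ω} = 1 := by
  have h0 : P {ω | ¬ Q ω} = 0 := ae_iff.mp h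
  have huniv : (Set.univ : Set Ω) ⊆ {ω | Q ω} ∪ {ω | ¬ Q ω} := by
    intro ω _
    by_cases hq : Q ω
    · exact Or.inl hq
    · exact Or.inr hq
  have h1 : (1:ℝ≥0∞) ≤ P {ω | Q ω} := by
    calc (1:ℝ≥0∞) = P Set.univ := (measure_univ).symm
    _ ≤ P ({ω | Q ω} ∪ {ω | ¬ Q ω}) := measure_mono huniv
    _ ≤ P {ω | Q ω} + P {ω | ¬ Q ω} := measure_union_le _ _
    _ = P {ω | Q ω} := by rw [h0, add_zero]
  exact le_antisymm prob_le_one h1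

lemma good_ae {NE NW : Ω → ℕ → ℕ} (hX0 : ∀ ω, X ω 0 = 0)
    (hN : ∀ᵐ ω ∂P, NE ω 1 = 0 ∧ ∀ k, 1 ≤ k →
      IsLeast {n : ℕ | NE ω k ≤ n ∧ X ω n = 1} (NW ω k) ∧
      IsLeast {n : ℕ | NW ω k ≤ n ∧ X ω n = 0} (NE ω (k + 1))) :
    ∀ᵐ ω ∂P, GoodP (X ω) := by
  filter_upwards [hN] with ω hω
  obtain ⟨hE1, hωk⟩ := hω
  have aux : ∀ k, 1 ≤ k → k ≤ NE ω (k+1) := by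
    intro k hk
    induction k with
    | zero => omega
    | succ k ih =>
        have h2 := (hωk (k+1) (by omega)).2
        have h1 := (hωk (k+1) (by omega)).1
        have hWE : NW ω (k+1) ≤ NE ω (k+2) := h2.1.1
        have hXE : X ω (NE ω (k+2)) = 0 := h2.1.2
        have hXW : X ω (NW ω (k+1)) = 1 := h1.1.2
        have hne : NE ω (k+2) ≠ NW ω (k+1) := by
          intro hh
          rw [hh, hXW] at hXE
          exact one_ne_zero hXE
        show k + 1 ≤ NE ω (k + 2)
        rcases Nat.eq_zero_or_pos k with hk0 | hk0
        · subst hk0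
          have hW0 : NW ω (0+1) ≠ 0 := by
            intro hh
            have h3 := h1.1.2
            rw [hh, hX0 ω] at h3
            exact one_ne_zero h3.symm
          omega
        · have ihh : k ≤ NE ω (k+1) := ih (by omega)
          have hEW : NE ω (k+1) ≤ NW ω (k+1) := h1.1.1
          omega
  intro m
  refine ⟨NE ω (m+1+1), ?_, ?_⟩
  · have := aux (m+1) (by omega)
    omega
  · exact ((hωk (m+1) (by omega)).2).1.2

lemma good_prob {NE NW : Ω → ℕ → ℕ} (hX0 : ∀ ω, X ω 0 = 0)
    (hN : ∀ᵐ ω ∂P, NE ω 1 = 0 ∧ ∀ k, 1 ≤ k →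
      IsLeast {n : ℕ | NE ω k ≤ n ∧ X ω n = 1} (NW ω k) ∧
      IsLeast {n : ℕ | NW ω k ≤ n ∧ X ω n = 0} (NE ω (k + 1))) :
    P {ω | GoodP (X ω)} = 1 :=
  prob_eq_one_of_ae P (good_ae P hX0 hN)

lemma decomp (hXmeas : ∀ n, Measurable (fun ω => X ω n))
    (hGood : P {ω | GoodP (X ω)} = 1)
    (n : ℕ) (a : ℕ → Bool) (W : Set Ω) (hW : MeasurableSet W) :
    P (Atom X n a ∩ W) = ∑' s : ℕ, P (Blk X n a s ∩ W) := by
  have hGc : P {ω | GoodP (X ω)}ᶜ = 0 := by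
    rw [measure_compl (measurable_Good hXmeas) (measure_ne_top _ _), hGood]
    simp
  have hsub1 : (⋃ s : ℕ, (Blk X n a s ∩ W)) ⊆ Atom X n a ∩ W := by
    rintro ω ⟨S, ⟨t, rfl⟩, hmem⟩
    exact ⟨fun i hi => hmem.1.2.2 i hi, hmem.2⟩
  have hsub2 : Atom X n a ∩ W ⊆ (⋃ s : ℕ, (Blk X n a s ∩ W)) ∪ {ω | GoodP (X ω)}ᶜ := by
    intro ω hmem
    by_cases hg : GoodP (X ω)
    · left
      refine Set.mem_iUnion.mpr ⟨zv (X ω) n, ⟨⟨?_, rfl, hmem.1⟩, hmem.2⟩⟩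
      intro i _
      exact (zv_lt_succ hg i).1
    · right
      exact hg
  have hdisj : Pairwise (Function.onFun Disjoint (fun s => Blk X n a s ∩ W)) := by
    intro s t hst
    rw [Function.onFun, Set.disjoint_left]
    rintro ω ⟨hs, -⟩ ⟨ht, -⟩
    exact hst (hs.2.1.symm.trans ht.2.1)
  have hmeasB : ∀ s : ℕ, MeasurableSet (Blk X n a s ∩ W) :=
    fun s => (measurable_Blk hXmeas n a s).inter hW
  rw [← measure_iUnion hdisj hmeasB]
  apply le_antisymm
  · calc P (Atom X n a ∩ W) ≤ P ((⋃ s : ℕ, (Blk X n a s ∩ W)) ∪ {ω | GoodP (X ω)}ᶜ) :=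
        measure_mono hsub2
    _ ≤ P (⋃ s : ℕ, (Blk X n a s ∩ W)) + P {ω | GoodP (X ω)}ᶜ := measure_union_le _ _
    _ = P (⋃ s : ℕ, (Blk X n a s ∩ W)) := by rw [hGc, add_zero]
  · exact measure_mono hsub1

lemma atom_prob (hXmeas : ∀ n, Measurable (fun ω => X ω n)) (hX0 : ∀ ω, X ω 0 = 0)
    (hXindep : iIndepFun (fun n ω => X ω (n + 1) - X ω n) P)
    (hXlaw : ∀ n : ℕ, Measure.map (fun ω => X ω (n + 1) - X ω n) P
      = (3 : ℝ≥0∞)⁻¹ • (Measure.dirac (-1 : ℤ) + Measure.dirac (0 : ℤ)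
          + Measure.dirac (1 : ℤ)))
    (hGood : P {ω | GoodP (X ω)} = 1) :
    ∀ (n : ℕ) (a : ℕ → Bool), P (Atom X n a) = ∏ i ∈ Finset.range n, pB (a i) := by
  intro n
  induction n with
  | zero =>
      intro a
      have : Atom X 0 a = Set.univ := by
        ext ω; simp [Atom]
      rw [this]
      simp
  | succ n ih =>
      intro a
      have hsplit : Atom X (n+1) a = Atom X n a ∩ {ω | gs (X ω) n = a n} := by
        ext ω
        simp only [Atom, Set.mem_setOf_eq, Set.mem_inter_iff]
        constructor
        · intro h
          exact ⟨fun i hi => h i (by omega), h n (by omega)⟩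
        · rintro ⟨h1, h2⟩ i hi
          rcases Nat.lt_succ_iff_lt_or_eq.mp hi with h | h
          · exact h1 i h
          · rw [h]; exact h2
      have hWmeas : MeasurableSet {ω | gs (X ω) n = a n} := by
        have := measurable_gsX (X := X) hXmeas n
          ((Set.to_countable ({a n} : Set Bool)).measurableSet)
        exact this
      rw [hsplit, decomp P hXmeas hGood n a _ hWmeas]
      have hstep : ∀ s : ℕ, P (Blk X n a s ∩ {ω | gs (X ω) n = a n})
          = P (Blk X n a s) * pB (a n) :=
        fun s => blk_step P hXmeas hX0 hXindep hXlaw n a s (a n)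
      rw [tsum_congr hstep, ENNReal.tsum_mul_right]
      have huniv : P (Atom X n a) = ∑' s : ℕ, P (Blk X n a s) := by
        have := decomp P hXmeas hGood n a Set.univ MeasurableSet.univ
        simpa using this
      rw [← huniv, ih a, Finset.prod_range_succ]

end MeasureThree

section Chernoff

noncomputable def prR (b : Bool) : ℝ := if b then 1/3 else 2/3
noncomputable def indR (b : Bool) : ℝ := if b then 1 else 0
def extB (n : ℕ) (a : Fin n → Bool) : ℕ → Bool := fun i => if h : i < n then a ⟨i, h⟩ else false

lemma pB_toReal (b : Bool) : (pB b).toReal = prR b := by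
  cases b
  · show ((2:ℝ≥0∞)/3).toReal = 2/3
    rw [ENNReal.toReal_div]
    norm_num
  · show ((3:ℝ≥0∞)⁻¹).toReal = 1/3
    rw [ENNReal.toReal_inv]
    norm_num

lemma prR_nonneg (b : Bool) : 0 ≤ prR b := by cases b <;> norm_num [prR]

lemma sum_prod_bool (w : Bool → ℝ) : ∀ n : ℕ,
    (∑ a : Fin n → Bool, ∏ i, w (a i)) = (w false + w true) ^ n := by
  intro n
  induction n with
  | zero => simp
  | succ n ih =>
      rw [← Equiv.sum_comp (Fin.consEquiv (fun _ : Fin (n+1) => Bool))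
        (fun a : Fin (n+1) → Bool => ∏ i, w (a i))]
      rw [Fintype.sum_prod_type]
      have hterm : ∀ (b : Bool) (a : Fin n → Bool),
          (∏ i, w (((Fin.consEquiv (fun _ : Fin (n+1) => Bool)) (b, a)) i))
            = w b * ∏ i, w (a i) := by
        intro b a
        rw [Fin.prod_univ_succ]
        simp only [Fin.consEquiv_apply, Fin.cons_zero, Fin.cons_succ]
      calc (∑ b : Bool, ∑ a : Fin n → Bool,
            ∏ i, w (((Fin.consEquiv (fun _ : Fin (n+1) => Bool)) (b, a)) i))
          = ∑ b : Bool, ∑ a : Fin n → Bool, w b * ∏ i, w (a i) := by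
            apply Finset.sum_congr rfl
            intro b _
            apply Finset.sum_congr rfl
            intro a _
            exact hterm b a
        _ = ∑ b : Bool, w b * ∑ a : Fin n → Bool, ∏ i, w (a i) := by
            apply Finset.sum_congr rfl
            intro b _
            rw [Finset.mul_sum]
        _ = (w false + w true) ^ (n+1) := by
            rw [ih, Fintype.sum_bool, pow_succ]
            ring

lemma mgf_pt {m : ℝ} (hm : |m| ≤ 1) :
    (2/3) * Real.exp (m * (0 - 1/3)) + (1/3) * Real.exp (m * (1 - 1/3)) ≤ 1 + m^2/3 := by
  have hm' := abs_le.mp hm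
  have h1 : |(-(m/3))| ≤ 1 := by rw [abs_le]; constructor <;> nlinarith [hm'.1, hm'.2]
  have h2 : |2*m/3| ≤ 1 := by rw [abs_le]; constructor <;> nlinarith [hm'.1, hm'.2]
  have e1 := Real.exp_bound h1 (n := 2) (by norm_num)
  have e2 := Real.exp_bound h2 (n := 2) (by norm_num)
  simp only [Finset.sum_range_succ, Finset.sum_range_zero] at e1 e2
  norm_num at e1 e2
  rw [abs_le] at e1 e2
  have hb1 : Real.exp (-(m/3)) ≤ 1 + (-(m/3)) + (3/4) * (m/3)^2 := by
    have := e1.2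
    have habs : |(-(m/3))| ^ 2 = (m/3)^2 := by rw [sq_abs]; ring_nf
    nlinarith [this, habs]
  have hb2 : Real.exp (2*m/3) ≤ 1 + (2*m/3) + (3/4) * (2*m/3)^2 := by
    have := e2.2
    have habs : |2*m/3| ^ 2 = (2*m/3)^2 := by rw [sq_abs]
    nlinarith [this, habs]
  have hq1 : m * (0 - 1/3) = -(m/3) := by ring
  have hq2 : m * (1 - 1/3) = 2*m/3 := by ring
  rw [hq1, hq2]
  nlinarith [hb1, hb2]

variable {Ω : Type*} [MeasurableSpace Ω] (P : Measure Ω) [IsProbabilityMeasure P]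
  {X : Ω → ℕ → ℤ}

lemma measurable_Atom (hXmeas : ∀ n, Measurable (fun ω => X ω n)) (n : ℕ) (a : ℕ → Bool) :
    MeasurableSet (Atom X n a) := by
  have : Atom X n a = ⋂ i : ℕ, ⋂ _ : i < n, ((fun ω => gs (X ω) i) ⁻¹' {a i}) := by
    ext ω
    simp only [Atom, Set.mem_setOf_eq, Set.mem_iInter, Set.mem_preimage, Set.mem_singleton_iff]
  rw [this]
  exact MeasurableSet.iInter (fun i => MeasurableSet.iInter (fun _ =>
    measurable_gsX hXmeas i ((Set.to_countable _).measurableSet)))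

lemma cnt_eq_sum (x : ℕ → ℤ) (n : ℕ) :
    ((cnt x n : ℝ)) = ∑ i ∈ Finset.range n, indR (gs x i) := by
  rw [cnt, Finset.card_filter]
  rw [Nat.cast_sum]
  apply Finset.sum_congr rfl
  intro i _
  by_cases h : gs x i = true <;> simp [h, indR]

lemma cnt_on_atomF {ω : Ω} (n : ℕ) (a : Fin n → Bool) (h : ω ∈ Atom X n (extB n a)) :
    ((cnt (X ω) n : ℝ)) = ∑ i : Fin n, indR (a i) := by
  rw [cnt_eq_sum, ← Fin.sum_univ_eq_sum_range (fun i => indR (gs (X ω) i)) n]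
  apply Finset.sum_congr rfl
  intro i _
  congr 1
  have := h i i.isLt
  rw [this, extB]
  simp

/-- The Chernoff bound for `cnt`. -/
lemma chernoff (hXmeas : ∀ n, Measurable (fun ω => X ω n)) (hX0 : ∀ ω, X ω 0 = 0)
    (hXindep : iIndepFun (fun n ω => X ω (n + 1) - X ω n) P)
    (hXlaw : ∀ n : ℕ, Measure.map (fun ω => X ω (n + 1) - X ω n) P
      = (3 : ℝ≥0∞)⁻¹ • (Measure.dirac (-1 : ℤ) + Measure.dirac (0 : ℤ)
          + Measure.dirac (1 : ℤ)))
    (hGood : P {ω | GoodP (X ω)} = 1)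
    (n : ℕ) (t lam s1 : ℝ) (hlam0 : 0 ≤ lam) (hlam1 : lam ≤ 1) (hs1 : s1 = 1 ∨ s1 = -1) :
    (P {ω | t < s1 * ((cnt (X ω) n : ℝ) - n/3)}).toReal
      ≤ Real.exp (-(lam*t) + n*lam^2/3) := by
  classical
  set U : Finset (Fin n → Bool) :=
    Finset.univ.filter (fun a => t < s1 * ((∑ i : Fin n, indR (a i)) - n/3)) with hU
  -- the event is the union of the atoms indexed by U
  have hev : {ω | t < s1 * ((cnt (X ω) n : ℝ) - n/3)}
      = ⋃ a ∈ U, Atom X n (extB n a) := by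
    ext ω
    simp only [Set.mem_setOf_eq, Set.mem_iUnion]
    constructor
    · intro h
      refine ⟨fun i => gs (X ω) i, ?_, ?_⟩
      · rw [hU, Finset.mem_filter]
        refine ⟨Finset.mem_univ _, ?_⟩
        have : ((cnt (X ω) n : ℝ)) = ∑ i : Fin n, indR (gs (X ω) (i : ℕ)) := by
          rw [cnt_eq_sum, ← Fin.sum_univ_eq_sum_range (fun i => indR (gs (X ω) i)) n]
        rw [← this]
        exact h
      · intro i hi
        rw [extB]
        simp [hi]
    · rintro ⟨a, haU, hmem⟩
      rw [hU, Finset.mem_filter] at haU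
      have := cnt_on_atomF (X := X) n a hmem
      rw [this]
      exact haU.2
  have hdisj : (U : Set (Fin n → Bool)).PairwiseDisjoint (fun a => Atom X n (extB n a)) := by
    intro a _ b _ hab
    rw [Function.onFun, Set.disjoint_left]
    intro ω ha hb
    apply hab
    funext i
    have h1 := ha i i.isLt
    have h2 := hb i i.isLt
    rw [h1] at h2
    rw [extB, extB] at h2
    simp only [i.isLt, dif_pos] at h2
    rw [Fin.eta] at h2
    exact h2
  have hsum : P {ω | t < s1 * ((cnt (X ω) n : ℝ) - n/3)}
      = ∑ a ∈ U, P (Atom X n (extB n a)) := by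
    rw [hev]
    exact measure_biUnion_finset hdisj (fun a _ => measurable_Atom hXmeas n (extB n a))
  have hatom : ∀ a : Fin n → Bool, (P (Atom X n (extB n a))).toReal = ∏ i : Fin n, prR (a i) := by
    intro a
    rw [atom_prob P hXmeas hX0 hXindep hXlaw hGood n (extB n a)]
    rw [← Fin.prod_univ_eq_prod_range (fun i => pB (extB n a i)) n]
    rw [ENNReal.toReal_prod]
    apply Finset.prod_congr rfl
    intro i _
    rw [show extB n a (i : ℕ) = a i by rw [extB]; simp]
    exact pB_toReal (a i)
  have htoReal : (P {ω | t < s1 * ((cnt (X ω) n : ℝ) - n/3)}).toReal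
      = ∑ a ∈ U, ∏ i : Fin n, prR (a i) := by
    rw [hsum, ENNReal.toReal_sum (fun a _ => measure_ne_top _ _)]
    exact Finset.sum_congr rfl (fun a _ => hatom a)
  rw [htoReal]
  -- now a purely real-variable estimate
  set w : Bool → ℝ := fun b => prR b * Real.exp (lam * s1 * (indR b - 1/3)) with hw
  have hwnn : ∀ b, 0 ≤ w b := fun b =>
    mul_nonneg (prR_nonneg b) (Real.exp_nonneg _)
  have hterm : ∀ a : Fin n → Bool, a ∈ U →
      (∏ i : Fin n, prR (a i)) ≤ Real.exp (-(lam*t)) * ∏ i : Fin n, w (a i) := by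
    intro a haU
    rw [hU, Finset.mem_filter] at haU
    have hS := haU.2
    have hsum2 : (∑ i : Fin n, lam * s1 * (indR (a i) - 1/3))
        = lam * s1 * ((∑ i : Fin n, indR (a i)) - n/3) := by
      rw [← Finset.mul_sum]
      congr 1
      rw [Finset.sum_sub_distrib, Finset.sum_const, Finset.card_univ, Fintype.card_fin]
      push_cast
      ring
    have hprod : ∏ i : Fin n, w (a i)
        = (∏ i : Fin n, prR (a i))
          * Real.exp (lam * s1 * ((∑ i : Fin n, indR (a i)) - n/3)) := by
      rw [hw]
      rw [Finset.prod_mul_distrib]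
      congr 1
      rw [← Real.exp_sum, hsum2]
    rw [hprod, ← mul_assoc, mul_comm (Real.exp (-(lam*t))), mul_assoc, ← Real.exp_add]
    nth_rewrite 1 [show (∏ i : Fin n, prR (a i)) = (∏ i : Fin n, prR (a i)) * 1 by ring]
    apply mul_le_mul_of_nonneg_left ?_ (Finset.prod_nonneg (fun i _ => prR_nonneg _))
    rw [← Real.exp_zero]
    apply Real.exp_le_exp.mpr
    nlinarith [hS, hlam0]
  have hμ : |lam * s1| ≤ 1 := by
    rcases hs1 with h | h <;> rw [h] <;>
      simp only [mul_one, mul_neg_one, abs_neg] <;> rw [abs_of_nonneg hlam0] <;> exact hlam1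
  have hs1sq : s1^2 = 1 := by rcases hs1 with h | h <;> rw [h] <;> norm_num
  have hwsum : w false + w true ≤ 1 + lam^2/3 := by
    have := mgf_pt hμ
    have hww : w false + w true
        = (2/3) * Real.exp ((lam*s1) * (0 - 1/3)) + (1/3) * Real.exp ((lam*s1) * (1 - 1/3)) := by
      rw [hw]
      simp only [prR, indR, if_true, if_false, Bool.false_eq_true]
    rw [hww]
    have hsq : (lam*s1)^2 = lam^2 := by rw [mul_pow, hs1sq, mul_one]
    calc (2/3) * Real.exp ((lam*s1) * (0 - 1/3)) + (1/3) * Real.exp ((lam*s1) * (1 - 1/3))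
        ≤ 1 + (lam*s1)^2/3 := this
      _ = 1 + lam^2/3 := by rw [hsq]
  have hwsum_nn : 0 ≤ w false + w true := add_nonneg (hwnn false) (hwnn true)
  calc (∑ a ∈ U, ∏ i : Fin n, prR (a i))
      ≤ ∑ a ∈ U, Real.exp (-(lam*t)) * ∏ i : Fin n, w (a i) := Finset.sum_le_sum hterm
    _ ≤ ∑ a : Fin n → Bool, Real.exp (-(lam*t)) * ∏ i : Fin n, w (a i) :=
        Finset.sum_le_sum_of_subset_of_nonneg (Finset.subset_univ U)
          (fun a _ _ => mul_nonneg (Real.exp_nonneg _)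
            (Finset.prod_nonneg (fun i _ => hwnn _)))
    _ = Real.exp (-(lam*t)) * ∑ a : Fin n → Bool, ∏ i : Fin n, w (a i) := by
        rw [Finset.mul_sum]
    _ = Real.exp (-(lam*t)) * (w false + w true)^n := by rw [sum_prod_bool]
    _ ≤ Real.exp (-(lam*t)) * (1 + lam^2/3)^n := by
        apply mul_le_mul_of_nonneg_left ?_ (Real.exp_nonneg _)
        exact pow_le_pow_left₀ hwsum_nn hwsum n
    _ ≤ Real.exp (-(lam*t)) * (Real.exp (lam^2/3))^n := by
        apply mul_le_mul_of_nonneg_left ?_ (Real.exp_nonneg _)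
        apply pow_le_pow_left₀ (by positivity) ?_ n
        have := Real.add_one_le_exp (lam^2/3)
        linarith
    _ = Real.exp (-(lam*t) + n*lam^2/3) := by
        rw [← Real.exp_nat_mul, ← Real.exp_add]
        congr 1
        ring

end Chernoff

lemma cnt_mono (x : ℕ → ℤ) {m n : ℕ} (h : m ≤ n) : cnt x m ≤ cnt x n := by
  apply Finset.card_le_card
  apply Finset.filter_subset_filter
  exact Finset.range_subset_range.mpr h

lemma key_incl {x : ℕ → ℤ} {nE nW : ℕ → ℕ} (h0 : x 0 = 0) (hx : GoodP x) (hs : StepsP x)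
    (hE1 : nE 1 = 0)
    (hW : ∀ k, 1 ≤ k → IsLeast {n | nE k ≤ n ∧ x n = 1} (nW k))
    (hE : ∀ k, 1 ≤ k → IsLeast {n | nW k ≤ n ∧ x n = 0} (nE (k+1)))
    {M k : ℕ} (hk1 : 1 ≤ k) (hkM : k ≤ M) {t : ℝ} (ht : 0 ≤ t)
    (hdev : t < |(k:ℝ) - (1/3) *
      (((Finset.range (nW k + 1)).filter (fun j => x j = 0)).card : ℝ)|) :
    ∃ n, n ≤ 3*M + ⌊3*t⌋₊ + 1 ∧
      (t < ((cnt x n : ℝ) - n/3) ∨ t < -((cnt x n : ℝ) - n/3)) := by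
  obtain ⟨i, hwi, hcnt⟩ := main_path h0 hx hs hE1 hW hE k hk1
  have hlval : ((Finset.range (nW k + 1)).filter (fun j => x j = 0)).card = i + 1 := by
    have h1 : nW k + 1 = (zv x i + 1) + 1 := by omega
    rw [h1, Finset.range_add_one, Finset.filter_insert]
    have hx1 : ¬ (x (zv x i + 1) = 0) := by
      have : x (zv x i + 1) = 1 := by rw [← hwi]; exact (hW k hk1).1.2
      omega
    rw [if_neg hx1, count_zeros h0 hx i]
  rw [hlval] at hdev
  have hA : (k:ℝ) - (1/3)*((i+1 : ℕ):ℝ) = (cnt x (i+1) : ℝ) - (i+1)/3 := by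
    rw [hcnt]
    push_cast
    ring
  rw [hA] at hdev
  rcases lt_abs.mp hdev with hpos | hneg
  · refine ⟨i+1, ?_, Or.inl (by push_cast at hpos ⊢; linarith)⟩
    have hklt : ((i+1 : ℕ):ℝ) < 3*(k:ℝ) := by
      have hck : ((cnt x (i+1) : ℕ):ℝ) = (k:ℝ) := by rw [hcnt]
      push_cast at hpos ⊢
      nlinarith [hpos, ht, hck]
    have : (i+1 : ℕ) < 3*k := by exact_mod_cast hklt
    omega
  · set n2 := 3*k + ⌊3*t⌋₊ + 1 with hn2
    have hfl : ((⌊3*t⌋₊ : ℕ):ℝ) ≤ 3*t := Nat.floor_le (by linarith)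
    have hfl2 : 3*t < ((⌊3*t⌋₊ : ℕ):ℝ) + 1 := Nat.lt_floor_add_one _
    have hn1gt : ((i+1 : ℕ):ℝ) > 3*(k:ℝ) + 3*t := by
      have hck : ((cnt x (i+1) : ℕ):ℝ) = (k:ℝ) := by rw [hcnt]
      push_cast at hneg ⊢
      nlinarith [hneg, hck]
    have hn2le : n2 ≤ i+1 := by
      have h1 : ((3*k + ⌊3*t⌋₊ : ℕ):ℝ) < ((i+1 : ℕ):ℝ) := by
        push_cast at hn1gt ⊢
        nlinarith [hfl, hn1gt]
      have := Nat.cast_lt (α := ℝ) |>.mp h1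
      omega
    have hcle : cnt x n2 ≤ k := by
      rw [← hcnt]
      exact cnt_mono x hn2le
    refine ⟨n2, by omega, Or.inr ?_⟩
    have hn2gt : ((n2 : ℕ):ℝ) > 3*(k:ℝ) + 3*t := by
      rw [hn2]
      push_cast
      nlinarith [hfl2]
    have hcler : ((cnt x n2 : ℕ):ℝ) ≤ (k:ℝ) := by exact_mod_cast hcle
    push_cast at hn2gt ⊢
    nlinarith [hn2gt, hcler]

section AE

variable {Ω : Type*} [MeasurableSpace Ω] (P : Measure Ω) [IsProbabilityMeasure P]
  {X : Ω → ℕ → ℤ}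

lemma steps_ae (hXmeas : ∀ n, Measurable (fun ω => X ω n))
    (hXlaw : ∀ n : ℕ, Measure.map (fun ω => X ω (n + 1) - X ω n) P
      = (3 : ℝ≥0∞)⁻¹ • (Measure.dirac (-1 : ℤ) + Measure.dirac (0 : ℤ)
          + Measure.dirac (1 : ℤ))) :
    ∀ᵐ ω ∂P, StepsP (X ω) := by
  have h1 : ∀ n : ℕ, ∀ᵐ ω ∂P, |X ω (n+1) - X ω n| ≤ 1 := by
    intro n
    rw [ae_iff]
    have : {ω | ¬ |X ω (n+1) - X ω n| ≤ 1}
        = (fun ω => X ω (n+1) - X ω n) ⁻¹' {z : ℤ | ¬ (|z| ≤ 1)} := rfl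
    rw [this, law_apply P hXmeas hXlaw n]
    rw [Measure.dirac_apply' _ (measurableSet_of_int _),
      Measure.dirac_apply' _ (measurableSet_of_int _),
      Measure.dirac_apply' _ (measurableSet_of_int _)]
    have e1 : ((-1:ℤ)) ∉ {z : ℤ | ¬ (|z| ≤ 1)} := by norm_num
    have e2 : ((0:ℤ)) ∉ {z : ℤ | ¬ (|z| ≤ 1)} := by norm_num
    have e3 : ((1:ℤ)) ∉ {z : ℤ | ¬ (|z| ≤ 1)} := by norm_num
    rw [Set.indicator_of_notMem e1, Set.indicator_of_notMem e2, Set.indicator_of_notMem e3]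
    simp
  filter_upwards [ae_all_iff.mpr h1] with ω hω
  exact hω

end AE

section Master

variable {Ω : Type*} [MeasurableSpace Ω] (P : Measure Ω) [IsProbabilityMeasure P]
  {X : Ω → ℕ → ℤ}

lemma master_bound
    (hXmeas : ∀ n, Measurable (fun ω => X ω n)) (hX0 : ∀ ω, X ω 0 = 0)
    (hXindep : iIndepFun (fun n ω => X ω (n + 1) - X ω n) P)
    (hXlaw : ∀ n : ℕ, Measure.map (fun ω => X ω (n + 1) - X ω n) P
      = (3 : ℝ≥0∞)⁻¹ • (Measure.dirac (-1 : ℤ) + Measure.dirac (0 : ℤ)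
          + Measure.dirac (1 : ℤ)))
    {NE NW : Ω → ℕ → ℕ}
    (hN : ∀ᵐ ω ∂P, NE ω 1 = 0 ∧ ∀ k, 1 ≤ k →
      IsLeast {n : ℕ | NE ω k ≤ n ∧ X ω n = 1} (NW ω k) ∧
      IsLeast {n : ℕ | NW ω k ≤ n ∧ X ω n = 0} (NE ω (k + 1)))
    {l : Ω → ℕ → ℕ}
    (hl : ∀ ω n, l ω n = ((Finset.range (n + 1)).filter (fun k => X ω k = 0)).card)
    (M : ℕ) (t : ℝ) (ht : 0 < t) :
    (P {ω | ∃ k, 1 ≤ k ∧ k ≤ M ∧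
        |(k : ℝ) - (1 / 3) * (l ω (NW ω k) : ℝ)| > t}).toReal
      ≤ ((3*M + ⌊3*t⌋₊ + 2 : ℕ):ℝ)
          * (2 * Real.exp (-(3*t^2/(4*((3*M + ⌊3*t⌋₊ + 1 : ℕ):ℝ))))) := by
  classical
  set V : ℕ := 3*M + ⌊3*t⌋₊ + 1 with hV
  set upS : ℕ → Set Ω := fun n => {ω | t < ((cnt (X ω) n : ℝ) - n/3)} with hupS
  set loS : ℕ → Set Ω := fun n => {ω | t < -((cnt (X ω) n : ℝ) - n/3)} with hloS
  have hGood := good_ae P hX0 hN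
  have hSteps := steps_ae P hXmeas hXlaw
  -- inclusion
  have hsub : {ω | ∃ k, 1 ≤ k ∧ k ≤ M ∧
        |(k : ℝ) - (1 / 3) * (l ω (NW ω k) : ℝ)| > t}
      ⊆ (⋃ n ∈ Finset.range (V+1), (upS n ∪ loS n))
        ∪ ({ω | ¬ GoodP (X ω)} ∪ {ω | ¬ StepsP (X ω)}
          ∪ {ω | ¬ (NE ω 1 = 0 ∧ ∀ k, 1 ≤ k →
            IsLeast {n : ℕ | NE ω k ≤ n ∧ X ω n = 1} (NW ω k) ∧
            IsLeast {n : ℕ | NW ω k ≤ n ∧ X ω n = 0} (NE ω (k + 1)))}) := by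
    intro ω hω
    obtain ⟨k, hk1, hkM, hdev⟩ := hω
    by_cases hg : GoodP (X ω)
    swap
    · exact Or.inr (Or.inl (Or.inl hg))
    by_cases hst : StepsP (X ω)
    swap
    · exact Or.inr (Or.inl (Or.inr hst))
    by_cases hn : (NE ω 1 = 0 ∧ ∀ k, 1 ≤ k →
        IsLeast {n : ℕ | NE ω k ≤ n ∧ X ω n = 1} (NW ω k) ∧
        IsLeast {n : ℕ | NW ω k ≤ n ∧ X ω n = 0} (NE ω (k + 1)))
    swap
    · exact Or.inr (Or.inr hn)
    left
    obtain ⟨hE1, hWE⟩ := hn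
    have hdev' : t < |(k:ℝ) - (1/3) *
        (((Finset.range (NW ω k + 1)).filter (fun j => X ω j = 0)).card : ℝ)| := by
      rw [← hl ω (NW ω k)]
      exact hdev
    obtain ⟨n, hnV, hcase⟩ := key_incl (hX0 ω) hg hst hE1
      (fun k' hk' => (hWE k' hk').1) (fun k' hk' => (hWE k' hk').2)
      hk1 hkM (le_of_lt ht) hdev'
    have hmem : ω ∈ upS n ∪ loS n := by
      rcases hcase with h | h
      · exact Or.inl h
      · exact Or.inr h
    exact Set.mem_biUnion (Finset.mem_range.mpr (by omega)) hmem
  -- null parts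
  have hz1 : P {ω | ¬ GoodP (X ω)} = 0 := ae_iff.mp hGood
  have hz2 : P {ω | ¬ StepsP (X ω)} = 0 := ae_iff.mp hSteps
  have hz3 : P {ω | ¬ (NE ω 1 = 0 ∧ ∀ k, 1 ≤ k →
      IsLeast {n : ℕ | NE ω k ≤ n ∧ X ω n = 1} (NW ω k) ∧
      IsLeast {n : ℕ | NW ω k ≤ n ∧ X ω n = 0} (NE ω (k + 1)))} = 0 := ae_iff.mp hN
  -- measure bound in ℝ≥0∞
  have hmb : P {ω | ∃ k, 1 ≤ k ∧ k ≤ M ∧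
        |(k : ℝ) - (1 / 3) * (l ω (NW ω k) : ℝ)| > t}
      ≤ ∑ n ∈ Finset.range (V+1), (P (upS n) + P (loS n)) := by
    calc P {ω | ∃ k, 1 ≤ k ∧ k ≤ M ∧
          |(k : ℝ) - (1 / 3) * (l ω (NW ω k) : ℝ)| > t}
        ≤ P ((⋃ n ∈ Finset.range (V+1), (upS n ∪ loS n))
            ∪ ({ω | ¬ GoodP (X ω)} ∪ {ω | ¬ StepsP (X ω)}
              ∪ {ω | ¬ (NE ω 1 = 0 ∧ ∀ k, 1 ≤ k →
                IsLeast {n : ℕ | NE ω k ≤ n ∧ X ω n = 1} (NW ω k) ∧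
                IsLeast {n : ℕ | NW ω k ≤ n ∧ X ω n = 0} (NE ω (k + 1)))})) :=
          measure_mono hsub
      _ ≤ P (⋃ n ∈ Finset.range (V+1), (upS n ∪ loS n))
            + P ({ω | ¬ GoodP (X ω)} ∪ {ω | ¬ StepsP (X ω)}
              ∪ {ω | ¬ (NE ω 1 = 0 ∧ ∀ k, 1 ≤ k →
                IsLeast {n : ℕ | NE ω k ≤ n ∧ X ω n = 1} (NW ω k) ∧
                IsLeast {n : ℕ | NW ω k ≤ n ∧ X ω n = 0} (NE ω (k + 1)))}) :=
          measure_union_le _ _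
      _ ≤ P (⋃ n ∈ Finset.range (V+1), (upS n ∪ loS n)) + 0 := by
          gcongr
          calc P ({ω | ¬ GoodP (X ω)} ∪ {ω | ¬ StepsP (X ω)}
              ∪ {ω | ¬ (NE ω 1 = 0 ∧ ∀ k, 1 ≤ k →
                IsLeast {n : ℕ | NE ω k ≤ n ∧ X ω n = 1} (NW ω k) ∧
                IsLeast {n : ℕ | NW ω k ≤ n ∧ X ω n = 0} (NE ω (k + 1)))})
              ≤ (P {ω | ¬ GoodP (X ω)} + P {ω | ¬ StepsP (X ω)})
                + P {ω | ¬ (NE ω 1 = 0 ∧ ∀ k, 1 ≤ k →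
                  IsLeast {n : ℕ | NE ω k ≤ n ∧ X ω n = 1} (NW ω k) ∧
                  IsLeast {n : ℕ | NW ω k ≤ n ∧ X ω n = 0} (NE ω (k + 1)))} :=
                le_trans (measure_union_le _ _) (by gcongr; exact measure_union_le _ _)
            _ = 0 := by rw [hz1, hz2, hz3]; simp
      _ = P (⋃ n ∈ Finset.range (V+1), (upS n ∪ loS n)) := by rw [add_zero]
      _ ≤ ∑ n ∈ Finset.range (V+1), P (upS n ∪ loS n) := measure_biUnion_finset_le _ _
      _ ≤ ∑ n ∈ Finset.range (V+1), (P (upS n) + P (loS n)) :=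
          Finset.sum_le_sum (fun n _ => measure_union_le _ _)
  -- pass to real numbers
  have hfin : (∑ n ∈ Finset.range (V+1), (P (upS n) + P (loS n))) ≠ ⊤ := by
    apply ne_of_lt
    apply ENNReal.sum_lt_top.mpr
    intro n _
    exact ENNReal.add_lt_top.mpr ⟨measure_lt_top _ _, measure_lt_top _ _⟩
  have htR : (P {ω | ∃ k, 1 ≤ k ∧ k ≤ M ∧
        |(k : ℝ) - (1 / 3) * (l ω (NW ω k) : ℝ)| > t}).toReal
      ≤ ∑ n ∈ Finset.range (V+1), ((P (upS n)).toReal + (P (loS n)).toReal) := by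
    calc (P {ω | ∃ k, 1 ≤ k ∧ k ≤ M ∧
          |(k : ℝ) - (1 / 3) * (l ω (NW ω k) : ℝ)| > t}).toReal
        ≤ (∑ n ∈ Finset.range (V+1), (P (upS n) + P (loS n))).toReal :=
          ENNReal.toReal_mono hfin hmb
      _ = ∑ n ∈ Finset.range (V+1), ((P (upS n)).toReal + (P (loS n)).toReal) := by
          rw [ENNReal.toReal_sum (fun n _ => ENNReal.add_ne_top.mpr
            ⟨measure_ne_top _ _, measure_ne_top _ _⟩)]
          exact Finset.sum_congr rfl (fun n _ => ENNReal.toReal_add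
            (measure_ne_top _ _) (measure_ne_top _ _))
  -- Chernoff each term
  have hGoodP := good_prob P hX0 hN
  set lam : ℝ := 3*t/(2*(V:ℝ)) with hlam
  have hVpos : (0:ℝ) < (V:ℝ) := by
    rw [hV]; push_cast; positivity
  have hlam0 : 0 ≤ lam := by rw [hlam]; positivity
  have h3tV : 3*t < (V:ℝ) := by
    have h1 : 3*t < ((⌊3*t⌋₊ : ℕ):ℝ) + 1 := Nat.lt_floor_add_one _
    rw [hV]
    push_cast
    linarith [Nat.cast_nonneg (α := ℝ) M]
  have hlam1 : lam ≤ 1 := by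
    rw [hlam, div_le_one (by positivity)]
    linarith
  have hterm : ∀ n, n ≤ V → (P (upS n)).toReal + (P (loS n)).toReal
      ≤ 2 * Real.exp (-(3*t^2/(4*(V:ℝ)))) := by
    intro n hn
    have hexple : -(lam*t) + n*lam^2/3 ≤ -(3*t^2/(4*(V:ℝ))) := by
      have hnV : (n:ℝ) ≤ (V:ℝ) := by exact_mod_cast hn
      have h1 : -(lam*t) + n*lam^2/3 ≤ -(lam*t) + V*lam^2/3 := by
        have : (0:ℝ) ≤ lam^2 := sq_nonneg _
        nlinarith [hnV, this]
      have h2 : -(lam*t) + V*lam^2/3 = -(3*t^2/(4*(V:ℝ))) := by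
        rw [hlam]
        field_simp
        ring
      linarith [h1, h2.le, h2.ge]
    have hup := chernoff P hXmeas hX0 hXindep hXlaw hGoodP n t lam 1 hlam0 hlam1 (Or.inl rfl)
    have hlo := chernoff P hXmeas hX0 hXindep hXlaw hGoodP n t lam (-1) hlam0 hlam1 (Or.inr rfl)
    have hup' : (P (upS n)).toReal ≤ Real.exp (-(3*t^2/(4*(V:ℝ)))) := by
      calc (P (upS n)).toReal = (P {ω | t < 1 * ((cnt (X ω) n : ℝ) - n/3)}).toReal := by
            congr 2
            rw [hupS]
            ext ω
            rw [Set.mem_setOf_eq, Set.mem_setOf_eq, one_mul]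
        _ ≤ Real.exp (-(lam*t) + n*lam^2/3) := hup
        _ ≤ Real.exp (-(3*t^2/(4*(V:ℝ)))) := Real.exp_le_exp.mpr hexple
    have hlo' : (P (loS n)).toReal ≤ Real.exp (-(3*t^2/(4*(V:ℝ)))) := by
      calc (P (loS n)).toReal = (P {ω | t < (-1) * ((cnt (X ω) n : ℝ) - n/3)}).toReal := by
            congr 2
            rw [hloS]
            ext ω
            rw [Set.mem_setOf_eq, Set.mem_setOf_eq, neg_one_mul]
        _ ≤ Real.exp (-(lam*t) + n*lam^2/3) := hlo
        _ ≤ Real.exp (-(3*t^2/(4*(V:ℝ)))) := Real.exp_le_exp.mpr hexple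
    linarith [hup', hlo']
  calc (P {ω | ∃ k, 1 ≤ k ∧ k ≤ M ∧
        |(k : ℝ) - (1 / 3) * (l ω (NW ω k) : ℝ)| > t}).toReal
      ≤ ∑ n ∈ Finset.range (V+1), ((P (upS n)).toReal + (P (loS n)).toReal) := htR
    _ ≤ ∑ _n ∈ Finset.range (V+1), 2 * Real.exp (-(3*t^2/(4*(V:ℝ)))) :=
        Finset.sum_le_sum (fun n hm => hterm n (by
          have := Finset.mem_range.mp hm
          omega))
    _ = ((V+1 : ℕ):ℝ) * (2 * Real.exp (-(3*t^2/(4*(V:ℝ))))) := by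
        rw [Finset.sum_const, Finset.card_range]
        push_cast
        ring
    _ = ((3*M + ⌊3*t⌋₊ + 2 : ℕ):ℝ)
          * (2 * Real.exp (-(3*t^2/(4*((3*M + ⌊3*t⌋₊ + 1 : ℕ):ℝ))))) := by
        rw [hV]

end Master

section Final

variable {Ω : Type*} [MeasurableSpace Ω] (P : Measure Ω) [IsProbabilityMeasure P]
  {X : Ω → ℕ → ℤ}

lemma final_tendsto
    (hXmeas : ∀ n, Measurable (fun ω => X ω n)) (hX0 : ∀ ω, X ω 0 = 0)
    (hXindep : iIndepFun (fun n ω => X ω (n + 1) - X ω n) P)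
    (hXlaw : ∀ n : ℕ, Measure.map (fun ω => X ω (n + 1) - X ω n) P
      = (3 : ℝ≥0∞)⁻¹ • (Measure.dirac (-1 : ℤ) + Measure.dirac (0 : ℤ)
          + Measure.dirac (1 : ℤ)))
    {NE NW : Ω → ℕ → ℕ}
    (hN : ∀ᵐ ω ∂P, NE ω 1 = 0 ∧ ∀ k, 1 ≤ k →
      IsLeast {n : ℕ | NE ω k ≤ n ∧ X ω n = 1} (NW ω k) ∧
      IsLeast {n : ℕ | NW ω k ≤ n ∧ X ω n = 0} (NE ω (k + 1)))
    {l : Ω → ℕ → ℕ}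
    (hl : ∀ ω n, l ω n = ((Finset.range (n + 1)).filter (fun k => X ω k = 0)).card)
    (ε p : ℝ) (hε : 0 < ε) (hε4 : ε ≤ 1/4) (hp : 0 < p) :
    Tendsto (fun M : ℕ => (M : ℝ) ^ p *
        (P {ω | ∃ k, 1 ≤ k ∧ k ≤ M ∧
          |(k : ℝ) - (1 / 3) * (l ω (NW ω k) : ℝ)| > (M : ℝ) ^ ((1 : ℝ) / 2 + ε)}).toReal)
      atTop (𝓝 0) := by
  set g : ℕ → ℝ := fun M => 16 * ((M:ℝ) ^ (p+1) * Real.exp (-((3:ℝ)/28) * (M:ℝ) ^ (2*ε)))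
    with hg
  have hgto : Tendsto g atTop (𝓝 0) := by
    have hq : (0:ℝ) < 2*ε := by linarith
    have hcomp : Tendsto (fun M : ℕ => (M:ℝ) ^ (2*ε)) atTop atTop :=
      (tendsto_rpow_atTop hq).comp tendsto_natCast_atTop_atTop
    have hbase : Tendsto (fun u : ℝ => u ^ ((p+1)/(2*ε)) * Real.exp (-((3:ℝ)/28) * u))
        atTop (𝓝 0) := tendsto_rpow_mul_exp_neg_mul_atTop_nhds_zero _ _ (by norm_num)
    have h2 : Tendsto (fun M : ℕ =>
        ((M:ℝ) ^ (2*ε)) ^ ((p+1)/(2*ε)) * Real.exp (-((3:ℝ)/28) * (M:ℝ) ^ (2*ε)))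
        atTop (𝓝 0) := hbase.comp hcomp
    have h3 : (fun M : ℕ =>
        ((M:ℝ) ^ (2*ε)) ^ ((p+1)/(2*ε)) * Real.exp (-((3:ℝ)/28) * (M:ℝ) ^ (2*ε)))
        = fun M : ℕ => (M:ℝ) ^ (p+1) * Real.exp (-((3:ℝ)/28) * (M:ℝ) ^ (2*ε)) := by
      funext M
      congr 1
      rw [← Real.rpow_mul (Nat.cast_nonneg M)]
      congr 1
      field_simp
    rw [h3] at h2
    have := h2.const_mul (16:ℝ)
    simpa [hg, mul_zero] using this
  refine squeeze_zero' ?_ ?_ hgto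
  · filter_upwards with M
    positivity
  · filter_upwards [eventually_ge_atTop 1] with M hM
    set t : ℝ := (M:ℝ) ^ ((1:ℝ)/2 + ε) with hts
    have hM0 : (0:ℝ) < (M:ℝ) := by exact_mod_cast hM
    have hM1 : (1:ℝ) ≤ (M:ℝ) := by exact_mod_cast hM
    have ht0 : 0 < t := Real.rpow_pos_of_pos hM0 _
    have hmb := master_bound P hXmeas hX0 hXindep hXlaw hN hl M t ht0
    have htM : t ≤ (M:ℝ) := by
      rw [hts]
      calc (M:ℝ) ^ ((1:ℝ)/2 + ε) ≤ (M:ℝ) ^ (1:ℝ) :=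
          Real.rpow_le_rpow_of_exponent_le hM1 (by linarith)
        _ = (M:ℝ) := Real.rpow_one _
    have hfl : ((⌊3*t⌋₊ : ℕ):ℝ) ≤ 3*t := Nat.floor_le (by linarith)
    have hVle : ((3*M + ⌊3*t⌋₊ + 1 : ℕ):ℝ) ≤ 7*(M:ℝ) := by
      push_cast
      linarith
    have hVpos : (0:ℝ) < ((3*M + ⌊3*t⌋₊ + 1 : ℕ):ℝ) := by
      push_cast
      linarith
    have hN2le : ((3*M + ⌊3*t⌋₊ + 2 : ℕ):ℝ) ≤ 8*(M:ℝ) := by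
      push_cast
      push_cast at hVle
      linarith
    have ht2 : t^2 = (M:ℝ) * (M:ℝ) ^ (2*ε) := by
      rw [hts]
      rw [← Real.rpow_natCast ((M:ℝ) ^ ((1:ℝ)/2 + ε)) 2]
      rw [← Real.rpow_mul (le_of_lt hM0)]
      rw [show ((1:ℝ)/2 + ε) * (2:ℕ) = 1 + 2*ε by push_cast; ring]
      rw [Real.rpow_add hM0, Real.rpow_one]
    have hexpcmp : ((3:ℝ)/28) * (M:ℝ) ^ (2*ε) ≤ 3*t^2/(4*((3*M + ⌊3*t⌋₊ + 1 : ℕ):ℝ)) := by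
      have h1 : 3*t^2/(4*((3*M + ⌊3*t⌋₊ + 1 : ℕ):ℝ)) ≥ 3*t^2/(28*(M:ℝ)) := by
        apply div_le_div_of_nonneg_left (by positivity) (by positivity)
        linarith
      have h2 : 3*t^2/(28*(M:ℝ)) = ((3:ℝ)/28) * (M:ℝ) ^ (2*ε) := by
        rw [ht2]
        field_simp
      linarith
    have hexp : Real.exp (-(3*t^2/(4*((3*M + ⌊3*t⌋₊ + 1 : ℕ):ℝ))))
        ≤ Real.exp (-(((3:ℝ)/28) * (M:ℝ) ^ (2*ε))) := by
      apply Real.exp_le_exp.mpr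
      linarith
    have hMp : (0:ℝ) ≤ (M:ℝ)^p := Real.rpow_nonneg (le_of_lt hM0) p
    calc (M : ℝ) ^ p * (P {ω | ∃ k, 1 ≤ k ∧ k ≤ M ∧
          |(k : ℝ) - (1 / 3) * (l ω (NW ω k) : ℝ)| > (M : ℝ) ^ ((1 : ℝ) / 2 + ε)}).toReal
        = (M : ℝ) ^ p * (P {ω | ∃ k, 1 ≤ k ∧ k ≤ M ∧
          |(k : ℝ) - (1 / 3) * (l ω (NW ω k) : ℝ)| > t}).toReal := by rw [hts]
      _ ≤ (M : ℝ) ^ p * (((3*M + ⌊3*t⌋₊ + 2 : ℕ):ℝ)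
            * (2 * Real.exp (-(3*t^2/(4*((3*M + ⌊3*t⌋₊ + 1 : ℕ):ℝ)))))) :=
          mul_le_mul_of_nonneg_left hmb hMp
      _ ≤ (M : ℝ) ^ p * ((8*(M:ℝ))
            * (2 * Real.exp (-(((3:ℝ)/28) * (M:ℝ) ^ (2*ε))))) := by
          apply mul_le_mul_of_nonneg_left ?_ hMp
          apply mul_le_mul hN2le ?_ (by positivity) (by linarith)
          exact mul_le_mul_of_nonneg_left hexp (by norm_num)
      _ = 16 * (((M:ℝ)^p * (M:ℝ)) * Real.exp (-(((3:ℝ)/28) * (M:ℝ) ^ (2*ε)))) := by ring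
      _ = g M := by
          simp only [hg]
          rw [Real.rpow_add hM0, Real.rpow_one]
          ring

end Final

end Stmt3Aux

/-- Let `(X_n)_{n≥0}` be a random walk with `X_0 = 0` and i.i.d. increments,
each uniform on `{−1, 0, 1}`.  Set `N_1^E = 0` and inductively let `N_k^W` be the least
`n ≥ N_k^E` with `X_n = 1` and `N_{k+1}^E` the least `n ≥ N_k^W` with `X_n = 0` (these are
a.s. well defined).  Let `𝔩_n = #{0 ≤ k ≤ n : X_k = 0}`.  Then for every `ε > 0` and every
`p > 0`, `M^p · P[max_{1 ≤ k ≤ M} |k − (1/3)·𝔩_{N_k^W}| > M^(1/2+ε)] → 0` as `M → ∞`. -/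
theorem stmt_3
    {Ω : Type*} [MeasurableSpace Ω] (P : Measure Ω) [IsProbabilityMeasure P]
    (X : Ω → ℕ → ℤ)
    (hXmeas : ∀ n, Measurable (fun ω => X ω n))
    (hX0 : ∀ ω, X ω 0 = 0)
    (hXindep : iIndepFun (fun n ω => X ω (n + 1) - X ω n) P)
    (hXlaw : ∀ n : ℕ, Measure.map (fun ω => X ω (n + 1) - X ω n) P
      = (3 : ℝ≥0∞)⁻¹ • (Measure.dirac (-1 : ℤ) + Measure.dirac (0 : ℤ)
          + Measure.dirac (1 : ℤ)))
    (NE NW : Ω → ℕ → ℕ)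
    (hN : ∀ᵐ ω ∂P, NE ω 1 = 0 ∧ ∀ k, 1 ≤ k →
      IsLeast {n : ℕ | NE ω k ≤ n ∧ X ω n = 1} (NW ω k) ∧
      IsLeast {n : ℕ | NW ω k ≤ n ∧ X ω n = 0} (NE ω (k + 1)))
    (l : Ω → ℕ → ℕ)
    (hl : ∀ ω n, l ω n = ((Finset.range (n + 1)).filter (fun k => X ω k = 0)).card) :
    ∀ ε > (0 : ℝ), ∀ p > (0 : ℝ),
      Tendsto
        (fun M : ℕ => (M : ℝ) ^ p *
          (P {ω | ∃ k, 1 ≤ k ∧ k ≤ M ∧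
              |(k : ℝ) - (1 / 3) * (l ω (NW ω k) : ℝ)| > (M : ℝ) ^ ((1 : ℝ) / 2 + ε)}).toReal)
        atTop (𝓝 0) := by
  intro ε hε p hp
  set ε' : ℝ := min ε (1/4) with hε'
  have hε'0 : 0 < ε' := lt_min hε (by norm_num)
  have hε'4 : ε' ≤ 1/4 := min_le_right _ _
  have hε'ε : ε' ≤ ε := min_le_left _ _
  have hmain := Stmt3Aux.final_tendsto P hXmeas hX0 hXindep hXlaw hN hl ε' p hε'0 hε'4 hp
  refine squeeze_zero' ?_ ?_ hmain
  · filter_upwards with M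
    positivity
  · filter_upwards [eventually_ge_atTop 1] with M hM
    have hM1 : (1:ℝ) ≤ (M:ℝ) := by exact_mod_cast hM
    have hsub : {ω | ∃ k, 1 ≤ k ∧ k ≤ M ∧
          |(k : ℝ) - (1 / 3) * (l ω (NW ω k) : ℝ)| > (M : ℝ) ^ ((1 : ℝ) / 2 + ε)}
        ⊆ {ω | ∃ k, 1 ≤ k ∧ k ≤ M ∧
          |(k : ℝ) - (1 / 3) * (l ω (NW ω k) : ℝ)| > (M : ℝ) ^ ((1 : ℝ) / 2 + ε')} := by
      rintro ω ⟨k, h1, h2, h3⟩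
      refine ⟨k, h1, h2, lt_of_le_of_lt ?_ h3⟩
      exact Real.rpow_le_rpow_of_exponent_le hM1 (by linarith)
    have hmono := measure_mono (μ := P) hsub
    have := ENNReal.toReal_mono (measure_ne_top P _) hmono
    apply mul_le_mul_of_nonneg_left this
    exact Real.rpow_nonneg (Nat.cast_nonneg M) p
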